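/- For ρ > 0, γ ≥ 0, define E_n := θ(∑_{k=0}^{n−1} 1/(k+ρ) + ∑_{m=1}^∞ (γ^m/m)(1/(ρ)_{\bar m} − 1/((n+ρ)_{\bar m}))) for n ≥ 1 and θ > 0. Then E_2 − E_1 = (θ/(1+ρ))·(1 + ∑_{m=1}^∞ γ^m/((2+ρ)_{\bar m})). -/

import Mathlib

set_option maxHeartbeats 1000000


/-- Rising factorial `(a)_{\bar b} = a(a+1)⋯(a+b-1)` for a real `a`. -/
noncomputable def riseFact (a : ℝ) (b : ℕ) : ℝ := ∏ j ∈ Finset.range b, (a + j)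

/-- The expected size of the accessory genome of a sample of size `n`. -/
noncomputable def expectedG (θ ρ γ : ℝ) (n : ℕ) : ℝ :=
  θ * (∑ k ∈ Finset.range n, 1 / ((k : ℝ) + ρ)
    + ∑' m : ℕ, (γ ^ (m + 1) / ((m : ℝ) + 1)) *
        (1 / riseFact ρ (m + 1) - 1 / riseFact ((n : ℝ) + ρ) (m + 1)))

lemma riseFact_pos {a : ℝ} (ha : 0 < a) (b : ℕ) : 0 < riseFact a b :=
  Finset.prod_pos fun j _ => by positivity

lemma riseFact_succ (a : ℝ) (b : ℕ) : riseFact a (b+1) = riseFact a b * (a + b) :=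
  Finset.prod_range_succ _ _

lemma riseFact_succ' (a : ℝ) (b : ℕ) : riseFact a (b+1) = riseFact (a+1) b * a := by
  rw [riseFact, Finset.prod_range_succ']
  simp only [Nat.cast_zero, add_zero]
  congr 1
  exact Finset.prod_congr rfl fun j _ => by push_cast; ring

lemma riseFact_one (b : ℕ) : riseFact 1 b = Nat.factorial b := by
  induction b with
  | zero => simp [riseFact]
  | succ n ih => rw [riseFact_succ, ih, Nat.factorial_succ]; push_cast; ring

lemma riseFact_mono {a c : ℝ} (ha : 0 < a) (hac : a ≤ c) (b : ℕ) :
    riseFact a b ≤ riseFact c b := by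
  apply Finset.prod_le_prod
  · intro j _; positivity
  · intro j _; linarith

lemma fact_le_riseFact {a : ℝ} (ha : 1 ≤ a) (b : ℕ) :
    (Nat.factorial b : ℝ) ≤ riseFact a b := by
  rw [← riseFact_one]; exact riseFact_mono one_pos ha b

-- key algebraic identity
lemma key_identity (ρ : ℝ) (hρ : 0 < ρ) (m : ℕ) :
    (1 / ((m:ℝ)+1)) * (1 / riseFact (1+ρ) (m+1) - 1 / riseFact (2+ρ) (m+1))
      = (1/(1+ρ)) * (1 / riseFact (2+ρ) (m+1)) := by
  have e : (1:ℝ)+ρ+1 = 2+ρ := by ring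
  have h1 : riseFact (1+ρ) (m+1) = riseFact (2+ρ) m * (1+ρ) := by
    rw [riseFact_succ', e]
  have h2 : riseFact (2+ρ) (m+1) = riseFact (2+ρ) m * (2+ρ+m) := riseFact_succ _ _
  have hA : (0:ℝ) < riseFact (2+ρ) m := riseFact_pos (by linarith) m
  have hm : (0:ℝ) < (m:ℝ)+1 := by positivity
  have hq : (0:ℝ) < 2+ρ+m := by positivity
  rw [h1, h2]
  field_simp
  ring

-- summability of the comparison series
lemma summable_aux (γ : ℝ) : Summable fun m : ℕ => γ ^ (m+1) / (Nat.factorial (m+1) : ℝ) :=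
  (Real.summable_pow_div_factorial γ).comp_injective Nat.succ_injective

lemma summable_g (ρ γ : ℝ) (hρ : 0 < ρ) (hγ : 0 ≤ γ) :
    Summable fun m : ℕ => γ ^ (m+1) / riseFact (2+ρ) (m+1) := by
  apply Summable.of_nonneg_of_le (f := fun m => γ ^ (m+1) / (Nat.factorial (m+1) : ℝ))
  · intro m
    have := riseFact_pos (show (0:ℝ) < 2+ρ by linarith) (m+1)
    positivity
  · intro m
    have h1 : (Nat.factorial (m+1) : ℝ) ≤ riseFact (2+ρ) (m+1) :=
      fact_le_riseFact (by linarith) _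
    have h2 : (0:ℝ) < (Nat.factorial (m+1) : ℝ) := by positivity
    gcongr
  · exact summable_aux γ

lemma summable_f (ρ γ : ℝ) (hρ : 0 < ρ) (hγ : 0 ≤ γ) (n : ℕ) (hn : 1 ≤ n) :
    Summable fun m : ℕ => (γ ^ (m + 1) / ((m : ℝ) + 1)) *
        (1 / riseFact ρ (m + 1) - 1 / riseFact ((n : ℝ) + ρ) (m + 1)) := by
  apply Summable.of_nonneg_of_le
    (f := fun m => (1/ρ) * (γ ^ (m+1) / (Nat.factorial (m+1) : ℝ)))
  · intro m
    have hρp := riseFact_pos hρ (m+1)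
    have hnp := riseFact_pos (show (0:ℝ) < (n:ℝ)+ρ by positivity) (m+1)
    have hle : riseFact ρ (m+1) ≤ riseFact ((n:ℝ)+ρ) (m+1) := by
      apply riseFact_mono hρ
      have : (0:ℝ) ≤ (n:ℝ) := Nat.cast_nonneg n
      linarith
    have hdiff : 0 ≤ 1 / riseFact ρ (m + 1) - 1 / riseFact ((n : ℝ) + ρ) (m + 1) := by
      have : 1 / riseFact ((n : ℝ) + ρ) (m + 1) ≤ 1 / riseFact ρ (m+1) := by
        gcongr
      linarith
    have : (0:ℝ) ≤ γ ^ (m+1) / ((m:ℝ)+1) := by positivity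
    exact mul_nonneg this hdiff
  · intro m
    have hρp := riseFact_pos hρ (m+1)
    have hnp := riseFact_pos (show (0:ℝ) < (n:ℝ)+ρ by positivity) (m+1)
    have hfact : ρ * (Nat.factorial m : ℝ) ≤ riseFact ρ (m+1) := by
      rw [riseFact_succ', mul_comm]
      have : (Nat.factorial m : ℝ) ≤ riseFact (ρ+1) m := fact_le_riseFact (by linarith) m
      nlinarith
    calc (γ ^ (m + 1) / ((m : ℝ) + 1)) *
        (1 / riseFact ρ (m + 1) - 1 / riseFact ((n : ℝ) + ρ) (m + 1))
        ≤ (γ ^ (m + 1) / ((m : ℝ) + 1)) * (1 / riseFact ρ (m + 1)) := by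
          have h1 : (0:ℝ) ≤ γ ^ (m+1) / ((m:ℝ)+1) := by positivity
          have h2 : 1 / riseFact ρ (m + 1) - 1 / riseFact ((n : ℝ) + ρ) (m + 1)
              ≤ 1 / riseFact ρ (m + 1) := by
            have : (0:ℝ) ≤ 1 / riseFact ((n:ℝ)+ρ) (m+1) := by positivity
            linarith
          exact mul_le_mul_of_nonneg_left h2 h1
      _ ≤ (1/ρ) * (γ ^ (m+1) / (Nat.factorial (m+1) : ℝ)) := by
          have hR : (1/ρ) * (γ ^ (m+1) / (Nat.factorial (m+1):ℝ))
              = γ^(m+1) / (ρ * (Nat.factorial (m+1):ℝ)) := by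
            field_simp
          have hL : (γ ^ (m + 1) / ((m : ℝ) + 1)) * (1 / riseFact ρ (m + 1))
              = γ^(m+1) / (((m:ℝ)+1) * riseFact ρ (m+1)) := by
            field_simp
          rw [hL, hR]
          have hden : ρ * (Nat.factorial (m+1) : ℝ) ≤ ((m:ℝ)+1) * riseFact ρ (m+1) := by
            have h3 : (Nat.factorial (m+1) : ℝ) = ((m:ℝ)+1) * (Nat.factorial m : ℝ) := by
              rw [Nat.factorial_succ]; push_cast; ring
            rw [h3]
            nlinarith [hfact, (show (0:ℝ) ≤ (m:ℝ) from Nat.cast_nonneg m)]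
          gcongr
  · exact (summable_aux γ).mul_left _


/-- `E_2 − E_1 = (θ/(1+ρ))(1 + ∑_{m≥1} γ^m/((2+ρ)_{\bar m}))`: the expected number of
pairwise differences in the infinitely many genes model with HGT. -/
theorem expected_pairwise_differences (θ ρ γ : ℝ) (hθ : 0 < θ) (hρ : 0 < ρ) (hγ : 0 ≤ γ) :
    expectedG θ ρ γ 2 - expectedG θ ρ γ 1
      = θ / (1 + ρ) * (1 + ∑' m : ℕ, γ ^ (m + 1) / riseFact (2 + ρ) (m + 1)) := by
  have hf1 := summable_f ρ γ hρ hγ 1 le_rfl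
  have hf2 := summable_f ρ γ hρ hγ 2 (by norm_num)
  have hg := summable_g ρ γ hρ hγ
  have c1 : (((1:ℕ)):ℝ) = 1 := by norm_num
  have c2 : (((2:ℕ)):ℝ) = 2 := by norm_num
  have hfun : ∀ m : ℕ, (γ ^ (m + 1) / ((m : ℝ) + 1)) *
        (1 / riseFact ρ (m + 1) - 1 / riseFact (((2:ℕ) : ℝ) + ρ) (m + 1))
      = (γ ^ (m + 1) / ((m : ℝ) + 1)) *
        (1 / riseFact ρ (m + 1) - 1 / riseFact (((1:ℕ) : ℝ) + ρ) (m + 1))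
        + (1/(1+ρ)) * (γ ^ (m+1) / riseFact (2+ρ) (m+1)) := by
    intro m
    rw [c1, c2]
    linear_combination (γ ^ (m+1)) * key_identity ρ hρ m
  have hT : (∑' m : ℕ, (γ ^ (m + 1) / ((m : ℝ) + 1)) *
        (1 / riseFact ρ (m + 1) - 1 / riseFact (((2:ℕ) : ℝ) + ρ) (m + 1)))
      = (∑' m : ℕ, (γ ^ (m + 1) / ((m : ℝ) + 1)) *
        (1 / riseFact ρ (m + 1) - 1 / riseFact (((1:ℕ) : ℝ) + ρ) (m + 1)))
        + (1/(1+ρ)) * ∑' m : ℕ, γ ^ (m+1) / riseFact (2+ρ) (m+1) := by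
    rw [tsum_congr hfun, Summable.tsum_add hf1 (hg.mul_left _), tsum_mul_left]
  simp only [expectedG, Finset.sum_range_succ, Finset.sum_range_one, Nat.cast_zero,
    Nat.cast_one, zero_add] at *
  rw [hT]
  have h1ρ : (1:ℝ) + ρ ≠ 0 := by positivity
  field_simp
  ring
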